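/- For every fixed integer k ≥ 0, there exists a constant C > 0 such that for every integer N ≥ 1, with h = 1/N, one has max_{0 ≤ i ≤ N} |Ψ_k(t_i) − ψ_k(t_i)| ≤ C h². -/

import Mathlib

open Set MeasureTheory

/-- The Green function of the problem `u''' = ψ`, `u(0) = u'(0) = u'(1) = 0` on `[0,1]`. -/
noncomputable def G01 (t s : ℝ) : ℝ :=
  if s ≤ t then s / 2 * (t ^ 2 - 2 * t + s) else t ^ 2 / 2 * (s - 1)

/-- The quadratic polynomial with `g(0) = b1`, `g'(0) = b2`, `g'(1) = b3`. -/
noncomputable def gq (b1 b2 b3 t : ℝ) : ℝ := b1 + b2 * t + (b3 - b2) / 2 * t ^ 2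

/-- Trapezoidal weights: `ρ_0 = ρ_N = 1/2` and `ρ_j = 1` for `1 ≤ j ≤ N − 1`. -/
noncomputable def trapWeight (N j : ℕ) : ℝ := if j = 0 ∨ j = N then 1 / 2 else 1

/-- Continuous iteration: `ψ₀(t) = f(t,0,0)`, `ψ_{k+1}(t) = f(t, u_k(t), v_k(t))`, where
`u_k(t) = g(t) + ∫₀¹ G(t,s) ψ_k(s) ds` and `v_k(t) = u_k(φ(t))`. -/
noncomputable def psiC (f : ℝ → ℝ → ℝ → ℝ) (φ : ℝ → ℝ) (b1 b2 b3 : ℝ) : ℕ → ℝ → ℝ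
  | 0 => fun t => f t 0 0
  | k + 1 => fun t =>
      f t (gq b1 b2 b3 t + ∫ s in (0:ℝ)..1, G01 t s * psiC f φ b1 b2 b3 k s)
        (gq b1 b2 b3 (φ t) + ∫ s in (0:ℝ)..1, G01 (φ t) s * psiC f φ b1 b2 b3 k s)

/-- `u_k(t) = g(t) + ∫₀¹ G(t,s) ψ_k(s) ds`. -/
noncomputable def uC (f : ℝ → ℝ → ℝ → ℝ) (φ : ℝ → ℝ) (b1 b2 b3 : ℝ) (k : ℕ) (t : ℝ) : ℝ :=
  gq b1 b2 b3 t + ∫ s in (0:ℝ)..1, G01 t s * psiC f φ b1 b2 b3 k s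

/-- `v_k(t) = u_k(φ(t))`. -/
noncomputable def vC (f : ℝ → ℝ → ℝ → ℝ) (φ : ℝ → ℝ) (b1 b2 b3 : ℝ) (k : ℕ) (t : ℝ) : ℝ :=
  uC f φ b1 b2 b3 k (φ t)

/-- Discrete iteration: `Ψ₀(t_i) = f(t_i,0,0)`,
`Ψ_{k+1}(t_i) = f(t_i, U_k(t_i), V_k(t_i))`, where `U_k`, `V_k` are trapezoidal
approximations of `u_k`, `v_k` on the uniform grid `t_i = i/N`. -/
noncomputable def PsiD (f : ℝ → ℝ → ℝ → ℝ) (φ : ℝ → ℝ) (b1 b2 b3 : ℝ) (N : ℕ) :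
    ℕ → ℕ → ℝ
  | 0 => fun i => f ((i : ℝ) / N) 0 0
  | k + 1 => fun i =>
      f ((i : ℝ) / N)
        (gq b1 b2 b3 ((i : ℝ) / N) + ∑ j ∈ Finset.range (N + 1),
          (1 / (N:ℝ)) * trapWeight N j * G01 ((i : ℝ) / N) ((j : ℝ) / N) *
            PsiD f φ b1 b2 b3 N k j)
        (gq b1 b2 b3 (φ ((i : ℝ) / N)) + ∑ j ∈ Finset.range (N + 1),
          (1 / (N:ℝ)) * trapWeight N j * G01 (φ ((i : ℝ) / N)) ((j : ℝ) / N) *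
            PsiD f φ b1 b2 b3 N k j)

/-- `U_k(t_i) = g(t_i) + Σ_j h ρ_j G(t_i, t_j) Ψ_k(t_j)`. -/
noncomputable def UD (f : ℝ → ℝ → ℝ → ℝ) (φ : ℝ → ℝ) (b1 b2 b3 : ℝ) (N k i : ℕ) : ℝ :=
  gq b1 b2 b3 ((i : ℝ) / N) + ∑ j ∈ Finset.range (N + 1),
    (1 / (N:ℝ)) * trapWeight N j * G01 ((i : ℝ) / N) ((j : ℝ) / N) * PsiD f φ b1 b2 b3 N k j

/-- `V_k(t_i) = g(ξ_i) + Σ_j h ρ_j G(ξ_i, t_j) Ψ_k(t_j)`, with `ξ_i = φ(t_i)`. -/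
noncomputable def VD (f : ℝ → ℝ → ℝ → ℝ) (φ : ℝ → ℝ) (b1 b2 b3 : ℝ) (N k i : ℕ) : ℝ :=
  gq b1 b2 b3 (φ ((i : ℝ) / N)) + ∑ j ∈ Finset.range (N + 1),
    (1 / (N:ℝ)) * trapWeight N j * G01 (φ ((i : ℝ) / N)) ((j : ℝ) / N) *
      PsiD f φ b1 b2 b3 N k j

noncomputable def Gs01 (t s : ℝ) : ℝ := t ^ 2 / 2 - max (t - s) 0

lemma G01_eq (t s : ℝ) : G01 t s = t ^ 2 * (s - 1) / 2 + max (t - s) 0 ^ 2 / 2 := by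
  unfold G01
  split_ifs with h
  · rw [max_eq_left (by linarith)]; ring
  · rw [max_eq_right (by linarith)]; ring

lemma sq_max_hasDerivAt (x : ℝ) : HasDerivAt (fun y : ℝ => max y 0 ^ 2) (2 * max x 0) x := by
  rcases lt_trichotomy x 0 with hx | hx | hx
  · have : (fun y : ℝ => max y 0 ^ 2) =ᶠ[nhds x] fun _ => (0:ℝ) := by
      filter_upwards [eventually_lt_nhds hx] with y hy
      rw [max_eq_right hy.le]; norm_num
    rw [max_eq_right hx.le, mul_zero]
    exact (hasDerivAt_const x (0:ℝ)).congr_of_eventuallyEq this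
  · subst hx
    rw [max_self, mul_zero]
    rw [hasDerivAt_iff_isLittleO]
    have h1 : (fun y : ℝ => max y 0 ^ 2 - max 0 0 ^ 2 - (y - 0) • (0:ℝ)) = fun y => max y 0 ^ 2 := by
      funext y; simp
    rw [h1]
    have h2 : (fun y : ℝ => max y 0 ^ 2) =O[nhds 0] fun y : ℝ => y ^ 2 := by
      apply Asymptotics.IsBigO.of_bound 1
      filter_upwards with y
      rcases le_or_gt y 0 with h | h
      · rw [max_eq_right h]
        simp
        positivity
      · rw [max_eq_left h.le]; simp
    have h3 : (fun y : ℝ => y ^ 2) =o[nhds 0] fun y : ℝ => y - 0 := by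
      rw [Asymptotics.isLittleO_iff]
      intro ε hε
      filter_upwards [Metric.ball_mem_nhds (0:ℝ) hε] with y hy
      rw [Metric.mem_ball, Real.dist_eq, sub_zero] at hy
      calc ‖y ^ 2‖ = |y| * |y| := by rw [Real.norm_eq_abs, sq, abs_mul]
        _ ≤ ε * |y| := mul_le_mul_of_nonneg_right hy.le (abs_nonneg y)
        _ = ε * ‖y - 0‖ := by rw [Real.norm_eq_abs, sub_zero]
    exact h2.trans_isLittleO h3
  · have : (fun y : ℝ => max y 0 ^ 2) =ᶠ[nhds x] fun y => y ^ 2 := by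
      filter_upwards [eventually_gt_nhds hx] with y hy
      rw [max_eq_left hy.le]
    rw [max_eq_left hx.le]
    exact ((hasDerivAt_pow 2 x).congr_of_eventuallyEq this).congr_deriv (by push_cast; ring)

lemma G01_hasDerivAt_snd (t x : ℝ) : HasDerivAt (fun s => G01 t s) (Gs01 t x) x := by
  have h1 : HasDerivAt (fun s : ℝ => t - s) (-1) x := by
    simpa using (hasDerivAt_id x).const_sub t
  have h2 : HasDerivAt (fun s : ℝ => max (t - s) 0 ^ 2) (2 * max (t - x) 0 * (-1)) x :=
    (sq_max_hasDerivAt (t - x)).comp x h1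
  have h3 : HasDerivAt (fun s : ℝ => t ^ 2 * (s - 1) / 2 + max (t - s) 0 ^ 2 / 2)
      (t ^ 2 / 2 + 2 * max (t - x) 0 * (-1) / 2) x := by
    exact (((hasDerivAt_id x).sub_const 1).const_mul (t^2)).div_const 2 |>.add (h2.div_const 2)
      |>.congr_deriv (by ring)
  have he : (fun s => G01 t s) = fun s : ℝ => t ^ 2 * (s - 1) / 2 + max (t - s) 0 ^ 2 / 2 :=
    funext fun s => G01_eq t s
  rw [he, Gs01]
  exact h3.congr_deriv (by ring)

lemma abs_G01_le {t s : ℝ} (ht : t ∈ Icc (0:ℝ) 1) (hs : s ∈ Icc (0:ℝ) 1) : |G01 t s| ≤ 1 := by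
  obtain ⟨ht0, ht1⟩ := ht; obtain ⟨hs0, hs1⟩ := hs
  rw [G01_eq]
  have h1 : |t ^ 2 * (s - 1) / 2| ≤ 1/2 := by
    rw [abs_div, abs_of_nonneg (by norm_num : (0:ℝ) ≤ 2)]
    rw [abs_mul]
    have : |t ^ 2| ≤ 1 := by rw [abs_of_nonneg (sq_nonneg t)]; nlinarith
    have : |s - 1| ≤ 1 := by rw [abs_of_nonpos (by linarith)]; linarith
    nlinarith [abs_nonneg (t^2), abs_nonneg (s-1), ‹|t^2| ≤ 1›]
  have h2 : |max (t - s) 0 ^ 2 / 2| ≤ 1/2 := by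
    have hm : max (t - s) 0 ≤ 1 := max_le (by linarith) (by norm_num)
    have hm0 : 0 ≤ max (t - s) 0 := le_max_right _ _
    rw [abs_of_nonneg (by positivity)]
    nlinarith
  calc |t ^ 2 * (s - 1) / 2 + max (t - s) 0 ^ 2 / 2| ≤ _ := abs_add_le _ _
    _ ≤ 1 := by linarith

lemma abs_Gs01_le {t s : ℝ} (ht : t ∈ Icc (0:ℝ) 1) (hs : s ∈ Icc (0:ℝ) 1) : |Gs01 t s| ≤ 3/2 := by
  obtain ⟨ht0, ht1⟩ := ht; obtain ⟨hs0, hs1⟩ := hs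
  rw [Gs01]
  have hm : max (t - s) 0 ≤ 1 := max_le (by linarith) (by norm_num)
  have hm0 : 0 ≤ max (t - s) 0 := le_max_right _ _
  rw [abs_le]; constructor <;> nlinarith

lemma abs_max_sub_max (a b : ℝ) : |max a 0 - max b 0| ≤ |a - b| := by
  rcases le_or_gt a 0 with h | h <;> rcases le_or_gt b 0 with h' | h'
  · simp [max_eq_right h, max_eq_right h']
  · rw [max_eq_right h, max_eq_left h'.le, zero_sub, abs_neg, abs_of_nonneg h'.le,
      abs_of_nonpos (by linarith)]; linarith
  · rw [max_eq_left h.le, max_eq_right h', sub_zero, abs_of_nonneg h.le,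
      abs_of_nonneg (by linarith)]; linarith
  · simp [max_eq_left h.le, max_eq_left h'.le]

lemma Gs01_lip (t x y : ℝ) : |Gs01 t x - Gs01 t y| ≤ |x - y| := by
  rw [Gs01, Gs01]
  have : t ^ 2 / 2 - max (t - x) 0 - (t ^ 2 / 2 - max (t - y) 0)
      = -(max (t - x) 0 - max (t - y) 0) := by ring
  rw [this, abs_neg]
  calc |max (t - x) 0 - max (t - y) 0| ≤ |t - x - (t - y)| := abs_max_sub_max _ _
    _ = |y - x| := by ring_nf
    _ = |x - y| := abs_sub_comm y x

lemma G01_lip_snd {t x y : ℝ} (ht : t ∈ Icc (0:ℝ) 1) (hx : x ∈ Icc (0:ℝ) 1)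
    (hy : y ∈ Icc (0:ℝ) 1) : |G01 t x - G01 t y| ≤ 3/2 * |x - y| := by
  have h := Convex.norm_image_sub_le_of_norm_hasDerivWithin_le
    (f := fun s => G01 t s) (f' := fun s => Gs01 t s) (s := Icc (0:ℝ) 1) (C := 3/2)
    (fun z hz => (G01_hasDerivAt_snd t z).hasDerivWithinAt)
    (fun z hz => by rw [Real.norm_eq_abs]; exact abs_Gs01_le ht hz)
    (convex_Icc 0 1) hy hx
  simpa using h

lemma trap_interval (g g' : ℝ → ℝ) (a b M : ℝ) (hab : a ≤ b) (hM : 0 ≤ M)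
    (hcont : ContinuousOn g (Icc a b)) (hcont' : ContinuousOn g' (Icc a b))
    (hderiv : ∀ x ∈ Ioo a b, HasDerivAt g (g' x) x)
    (hlip : ∀ x ∈ Icc a b, ∀ y ∈ Icc a b, |g' x - g' y| ≤ M * |x - y|) :
    |(∫ s in a..b, g s) - (b - a) * (g a + g b) / 2| ≤ M * (b - a) ^ 3 := by
  have huIcc : uIcc a b = Icc a b := uIcc_of_le hab
  have hint' : IntervalIntegrable g' volume a b := by
    apply ContinuousOn.intervalIntegrable; rwa [huIcc]
  have hintg : IntervalIntegrable g volume a b := by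
    apply ContinuousOn.intervalIntegrable; rwa [huIcc]
  have hintw : IntervalIntegrable (fun s => (b - s) * g' s) volume a b := by
    apply ContinuousOn.intervalIntegrable; rw [huIcc]
    exact (continuousOn_const.sub continuousOn_id).mul hcont'
  set m := (a + b) / 2 with hm
  have hmI : m ∈ Icc a b := ⟨by rw [hm]; linarith, by rw [hm]; linarith⟩
  have hintm : IntervalIntegrable (fun s => (m - s) * g' s) volume a b := by
    apply ContinuousOn.intervalIntegrable; rw [huIcc]
    exact (continuousOn_const.sub continuousOn_id).mul hcont'
  have hintc : IntervalIntegrable (fun s => (m - s) * g' m) volume a b := by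
    apply ContinuousOn.intervalIntegrable; rw [huIcc]
    exact (continuousOn_const.sub continuousOn_id).mul continuousOn_const
  -- FTC 1 : ∫ g' = g b - g a
  have h1 : ∫ s in a..b, g' s = g b - g a :=
    intervalIntegral.integral_eq_sub_of_hasDeriv_right_of_le hab hcont
      (fun x hx => (hderiv x hx).hasDerivWithinAt) hint'
  -- FTC 2 : integration by parts for (b - s) * g s
  have h2 : ∫ s in a..b, ((b - s) * g' s - g s) = (b - b) * g b - (b - a) * g a := by
    apply intervalIntegral.integral_eq_sub_of_hasDeriv_right_of_le hab
      ((continuousOn_const.sub continuousOn_id).mul hcont)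
    · intro x hx
      have : HasDerivAt (fun s => (b - s) * g s) ((-1) * g x + (b - x) * g' x) x :=
        HasDerivAt.mul (by simpa using (hasDerivAt_id x).const_sub b) (hderiv x hx)
      exact (this.congr_deriv (by ring)).hasDerivWithinAt
    · exact hintw.sub hintg
  have h2' : ∫ s in a..b, g s = (∫ s in a..b, (b - s) * g' s) + (b - a) * g a := by
    rw [intervalIntegral.integral_sub hintw hintg] at h2
    linarith
  -- ∫ (m - s) ds = 0
  have i2 : ∫ s in a..b, (m - s) = 0 := by
    have : ∫ s in a..b, (m - s) = (∫ _ in a..b, m) - ∫ s in a..b, s :=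
      intervalIntegral.integral_sub intervalIntegrable_const
        (ContinuousOn.intervalIntegrable (by fun_prop))
    rw [this, intervalIntegral.integral_const, integral_id, hm]
    simp; ring
  have e1 : ∫ s in a..b, (m - s) * (g' s - g' m) = ∫ s in a..b, (m - s) * g' s := by
    have : ∀ s ∈ uIcc a b, (m - s) * (g' s - g' m) = (m - s) * g' s - (m - s) * g' m :=
      fun s _ => by ring
    rw [intervalIntegral.integral_congr this, intervalIntegral.integral_sub hintm hintc,
      intervalIntegral.integral_mul_const, i2]
    ring
  have e2 : ∫ s in a..b, (m - s) * g' s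
      = (∫ s in a..b, (b - s) * g' s) - (b - a) / 2 * (g b - g a) := by
    have : ∀ s ∈ uIcc a b, (m - s) * g' s = (b - s) * g' s - (b - a) / 2 * g' s :=
      fun s _ => by rw [hm]; ring
    rw [intervalIntegral.integral_congr this,
      intervalIntegral.integral_sub hintw (hint'.const_mul _),
      intervalIntegral.integral_const_mul, h1]
  have key : (∫ s in a..b, g s) - (b - a) * (g a + g b) / 2
      = ∫ s in a..b, (m - s) * (g' s - g' m) := by
    rw [e1, e2, h2']; ring
  rw [key]
  have hb : ∀ x ∈ Set.uIoc a b, ‖(m - x) * (g' x - g' m)‖ ≤ M * (b - a) ^ 2 := by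
    intro x hx
    rw [Set.uIoc_of_le hab] at hx
    have hxI : x ∈ Icc a b := ⟨hx.1.le, hx.2⟩
    have hb1 : |m - x| ≤ b - a := by
      rw [abs_le]; constructor
      · have := hmI.1; have := hxI.2; linarith
      · have := hmI.2; have := hxI.1; linarith
    have hb2 : |g' x - g' m| ≤ M * (b - a) := by
      refine le_trans (hlip x hxI m hmI) ?_
      have : |x - m| ≤ b - a := by
        rw [abs_le]; constructor
        · have := hmI.2; have := hxI.1; linarith
        · have := hmI.1; have := hxI.2; linarith
      nlinarith [abs_nonneg (x - m)]
    rw [Real.norm_eq_abs, abs_mul]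
    calc |m - x| * |g' x - g' m| ≤ (b - a) * (M * (b - a)) := by
          apply mul_le_mul hb1 hb2 (abs_nonneg _)
          linarith
      _ = M * (b - a) ^ 2 := by ring
  have := intervalIntegral.norm_integral_le_of_norm_le_const hb
  rw [Real.norm_eq_abs] at this
  refine le_trans this ?_
  rw [abs_of_nonneg (by linarith : (0:ℝ) ≤ b - a)]
  nlinarith [sq_nonneg (b - a)]


lemma trapWeight_nonneg (N j : ℕ) : 0 ≤ trapWeight N j := by
  unfold trapWeight; split_ifs <;> norm_num

lemma trapWeight_le_one (N j : ℕ) : trapWeight N j ≤ 1 := by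
  unfold trapWeight; split_ifs <;> norm_num

lemma trap_sum_eq {N : ℕ} (hN : 1 ≤ N) (a : ℕ → ℝ) :
    ∑ j ∈ Finset.range (N + 1), trapWeight N j * a j
      = ∑ j ∈ Finset.range N, (a j + a (j + 1)) / 2 := by
  have hN0 : (0:ℕ) ≠ N := by omega
  have hsplit : ∀ j ∈ Finset.range (N + 1), trapWeight N j * a j
      = a j - (if j = 0 then a j / 2 else 0) - (if j = N then a j / 2 else 0) := by
    intro j hj
    unfold trapWeight
    rcases eq_or_ne j 0 with h0 | h0
    · subst h0
      rw [if_pos (Or.inl rfl), if_pos rfl, if_neg hN0]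
      ring
    · rcases eq_or_ne j N with h1 | h1
      · subst h1
        rw [if_pos (Or.inr rfl), if_neg h0, if_pos rfl]
        ring
      · rw [if_neg (by tauto), if_neg h0, if_neg h1]
        ring
  rw [Finset.sum_congr rfl hsplit]
  rw [Finset.sum_sub_distrib, Finset.sum_sub_distrib]
  rw [Finset.sum_ite_eq' (Finset.range (N + 1)) 0 (fun j => a j / 2),
    Finset.sum_ite_eq' (Finset.range (N + 1)) N (fun j => a j / 2)]
  rw [if_pos (Finset.mem_range.2 (by omega)), if_pos (Finset.mem_range.2 (by omega))]
  have hrhs : ∑ j ∈ Finset.range N, (a j + a (j + 1)) / 2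
      = (∑ j ∈ Finset.range N, a j) / 2 + (∑ j ∈ Finset.range N, a (j + 1)) / 2 := by
    rw [← Finset.sum_div, Finset.sum_add_distrib]
    ring
  rw [hrhs]
  have h1 : ∑ j ∈ Finset.range (N + 1), a j = (∑ j ∈ Finset.range N, a j) + a N :=
    Finset.sum_range_succ a N
  have h2 : ∑ j ∈ Finset.range (N + 1), a j = (∑ j ∈ Finset.range N, a (j + 1)) + a 0 :=
    Finset.sum_range_succ' a N
  linarith

lemma trap_weight_total {N : ℕ} (hN : 1 ≤ N) :
    ∑ j ∈ Finset.range (N + 1), (1 / (N:ℝ)) * trapWeight N j = 1 := by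
  have hNpos : (0:ℝ) < N := by exact_mod_cast Nat.pos_of_ne_zero (by omega)
  have : ∑ j ∈ Finset.range (N + 1), trapWeight N j
      = ∑ j ∈ Finset.range N, ((1:ℝ) + 1) / 2 := by
    simpa using trap_sum_eq hN (fun _ => (1:ℝ))
  rw [← Finset.mul_sum, this]
  simp [Finset.sum_const, Finset.card_range]
  field_simp



noncomputable def clamp01 (s : ℝ) : ℝ := max 0 (min s 1)

lemma clamp01_mem (s : ℝ) : clamp01 s ∈ Icc (0:ℝ) 1 :=
  ⟨le_max_left _ _, max_le (by norm_num) (min_le_right _ _)⟩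

lemma clamp01_eq {s : ℝ} (hs : s ∈ Icc (0:ℝ) 1) : clamp01 s = s := by
  rw [clamp01, min_eq_left hs.2, max_eq_right hs.1]

lemma clamp01_continuous : Continuous clamp01 :=
  continuous_const.max (continuous_id.min continuous_const)

lemma ftc_cont {w : ℝ → ℝ} (hw : Continuous w) (t : ℝ) :
    HasDerivAt (fun t => ∫ s in (0:ℝ)..t, w s) (w t) t :=
  intervalIntegral.integral_hasDerivAt_right (hw.intervalIntegrable 0 t)
    (hw.stronglyMeasurableAtFilter _ _) hw.continuousAt

lemma integral_G_smooth (ψ : ℝ → ℝ) (hψ : ContinuousOn ψ (Icc 0 1)) :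
    ∃ Fg : ℝ → ℝ, ContDiff ℝ 2 Fg ∧
      ∀ t ∈ Icc (0:ℝ) 1, (∫ s in (0:ℝ)..1, G01 t s * ψ s) = Fg t := by
  set ψ' : ℝ → ℝ := fun s => ψ (clamp01 s) with hψ'def
  have hψ'c : Continuous ψ' := hψ.comp_continuous clamp01_continuous clamp01_mem
  have hψ'eq : ∀ s ∈ Icc (0:ℝ) 1, ψ' s = ψ s := fun s hs => by rw [hψ'def]; simp [clamp01_eq hs]
  set c1 : ℝ := ∫ s in (0:ℝ)..1, (s - 1) * ψ' s with hc1
  set P : ℝ → ℝ := fun t => ∫ s in (0:ℝ)..t, ψ' s with hP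
  set Q : ℝ → ℝ := fun t => ∫ s in (0:ℝ)..t, s * ψ' s with hQ
  set R : ℝ → ℝ := fun t => ∫ s in (0:ℝ)..t, s ^ 2 * ψ' s with hR
  have hPd : ∀ t : ℝ, HasDerivAt P (ψ' t) t := fun t => ftc_cont hψ'c t
  have hQd : ∀ t : ℝ, HasDerivAt Q (t * ψ' t) t := fun t => ftc_cont (by fun_prop) t
  have hRd : ∀ t : ℝ, HasDerivAt R (t ^ 2 * ψ' t) t := fun t => ftc_cont (by fun_prop) t
  set F0 : ℝ → ℝ := fun t => t ^ 2 * P t - 2 * t * Q t + R t with hF0def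
  set F1 : ℝ → ℝ := fun t => 2 * t * P t - 2 * Q t with hF1def
  have hF0d : ∀ t : ℝ, HasDerivAt F0 (F1 t) t := by
    intro t
    have h1 : HasDerivAt (fun t : ℝ => t ^ 2 * P t) (2 * t * P t + t ^ 2 * ψ' t) t := by
      have := (hasDerivAt_pow 2 t).mul (hPd t)
      exact this.congr_deriv (by push_cast; ring)
    have h2 : HasDerivAt (fun t : ℝ => 2 * t * Q t) (2 * Q t + 2 * t * (t * ψ' t)) t := by
      have := ((hasDerivAt_id t).const_mul 2).mul (hQd t)
      exact this.congr_deriv (by simp only [id_eq]; ring)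
    have := (h1.sub h2).add (hRd t)
    exact this.congr_deriv (by rw [hF1def]; ring)
  have hF1d : ∀ t : ℝ, HasDerivAt F1 (2 * P t) t := by
    intro t
    have h1 : HasDerivAt (fun t : ℝ => 2 * t * P t) (2 * P t + 2 * t * ψ' t) t := by
      have := ((hasDerivAt_id t).const_mul 2).mul (hPd t)
      exact this.congr_deriv (by simp only [id_eq]; ring)
    have h2 : HasDerivAt (fun t : ℝ => 2 * Q t) (2 * (t * ψ' t)) t := (hQd t).const_mul 2
    exact (h1.sub h2).congr_deriv (by ring)
  have hPdiff : Differentiable ℝ P := fun t => (hPd t).differentiableAt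
  have hPc : Continuous P := hPdiff.continuous
  have hF0diff : Differentiable ℝ F0 := fun t => (hF0d t).differentiableAt
  have hF1diff : Differentiable ℝ F1 := fun t => (hF1d t).differentiableAt
  have hderivF0 : deriv F0 = F1 := funext fun t => (hF0d t).deriv
  have hderivF1 : deriv F1 = fun t => 2 * P t := funext fun t => (hF1d t).deriv
  have hF0smooth : ContDiff ℝ 2 F0 := by
    rw [show (2 : WithTop ℕ∞) = 1 + 1 from rfl, contDiff_succ_iff_deriv]
    refine ⟨hF0diff, by simp, ?_⟩
    rw [hderivF0, contDiff_one_iff_deriv]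
    exact ⟨hF1diff, by rw [hderivF1]; exact continuous_const.mul hPc⟩
  refine ⟨fun t => c1 * t ^ 2 / 2 + F0 t / 2, ?_, ?_⟩
  · exact ((contDiff_const.mul (contDiff_id.pow 2)).div_const 2).add (hF0smooth.div_const 2)
  · intro t ht
    have huIcc01 : uIcc (0:ℝ) 1 = Icc 0 1 := uIcc_of_le zero_le_one
    have hint1 : IntervalIntegrable (fun s => (s - 1) * ψ' s) volume 0 1 := by
      apply Continuous.intervalIntegrable; fun_prop
    have hmaxc : Continuous (fun s => max (t - s) 0 ^ 2 * ψ' s) := by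
      apply Continuous.mul _ hψ'c
      exact ((continuous_const.sub continuous_id).max continuous_const).pow 2
    have hint2 : IntervalIntegrable (fun s => max (t - s) 0 ^ 2 * ψ' s) volume 0 1 :=
      hmaxc.intervalIntegrable 0 1
    have hs1 : ∀ s ∈ uIcc (0:ℝ) 1, G01 t s * ψ s
        = t ^ 2 / 2 * ((s - 1) * ψ' s) + 1 / 2 * (max (t - s) 0 ^ 2 * ψ' s) := by
      intro s hs
      rw [huIcc01] at hs
      rw [hψ'eq s hs, G01_eq]
      ring
    rw [intervalIntegral.integral_congr hs1,
      intervalIntegral.integral_add ((hint1.const_mul _)) (hint2.const_mul _),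
      intervalIntegral.integral_const_mul, intervalIntegral.integral_const_mul, ← hc1]
    -- now handle W t := ∫ s in 0..1, max (t - s) 0 ^ 2 * ψ' s
    have hW : (∫ s in (0:ℝ)..1, max (t - s) 0 ^ 2 * ψ' s) = F0 t := by
      have hsplit : (∫ s in (0:ℝ)..t, max (t - s) 0 ^ 2 * ψ' s)
          + (∫ s in t..(1:ℝ), max (t - s) 0 ^ 2 * ψ' s)
          = ∫ s in (0:ℝ)..1, max (t - s) 0 ^ 2 * ψ' s :=
        intervalIntegral.integral_add_adjacent_intervals
          (hmaxc.intervalIntegrable 0 t) (hmaxc.intervalIntegrable t 1)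
      have hright : (∫ s in t..(1:ℝ), max (t - s) 0 ^ 2 * ψ' s) = 0 := by
        have : ∀ s ∈ uIcc t (1:ℝ), max (t - s) 0 ^ 2 * ψ' s = 0 := by
          intro s hs
          rw [uIcc_of_le ht.2] at hs
          rw [max_eq_right (by linarith [hs.1])]
          ring
        rw [intervalIntegral.integral_congr this]
        simp
      have hleft : (∫ s in (0:ℝ)..t, max (t - s) 0 ^ 2 * ψ' s) = F0 t := by
        have hcongr : ∀ s ∈ uIcc (0:ℝ) t, max (t - s) 0 ^ 2 * ψ' s
            = t ^ 2 * ψ' s - 2 * t * (s * ψ' s) + s ^ 2 * ψ' s := by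
          intro s hs
          rw [uIcc_of_le ht.1] at hs
          rw [max_eq_left (by linarith [hs.2])]
          ring
        have i1 : IntervalIntegrable (fun s => t ^ 2 * ψ' s) volume 0 t := by
          apply Continuous.intervalIntegrable; fun_prop
        have i2 : IntervalIntegrable (fun s : ℝ => 2 * t * (s * ψ' s)) volume 0 t := by
          apply Continuous.intervalIntegrable; fun_prop
        have i3 : IntervalIntegrable (fun s : ℝ => s ^ 2 * ψ' s) volume 0 t := by
          apply Continuous.intervalIntegrable; fun_prop
        rw [intervalIntegral.integral_congr hcongr,
          intervalIntegral.integral_add (i1.sub i2) i3,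
          intervalIntegral.integral_sub i1 i2,
          intervalIntegral.integral_const_mul, intervalIntegral.integral_const_mul]
      linarith [hsplit, hright, hleft]
    rw [hW]
    ring

lemma G01_continuous_snd (t : ℝ) : Continuous (fun s => G01 t s) := by
  have : (fun s => G01 t s) = fun s : ℝ => t ^ 2 * (s - 1) / 2 + max (t - s) 0 ^ 2 / 2 :=
    funext fun s => G01_eq t s
  rw [this]; fun_prop

lemma Gs01_continuous_snd (t : ℝ) : Continuous (fun s => Gs01 t s) := by
  unfold Gs01; fun_prop

lemma psiC_smooth (b1 b2 b3 : ℝ) (φ : ℝ → ℝ) (f : ℝ → ℝ → ℝ → ℝ)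
    (hφ : ContDiffOn ℝ 2 φ (Icc 0 1)) (hφm : MapsTo φ (Icc 0 1) (Icc 0 1))
    (hf : ContDiffOn ℝ 2 (fun p : ℝ × ℝ × ℝ => f p.1 p.2.1 p.2.2)
      (Icc 0 1 ×ˢ (univ : Set ℝ) ×ˢ (univ : Set ℝ))) :
    ∀ k, ContDiffOn ℝ 2 (psiC f φ b1 b2 b3 k) (Icc 0 1) := by
  have hgq : ContDiff ℝ 2 (fun t => gq b1 b2 b3 t) := by unfold gq; fun_prop
  intro k
  induction k with
  | zero =>
    have htriple : ContDiffOn ℝ 2 (fun t : ℝ => (t, (0:ℝ), (0:ℝ))) (Icc 0 1) :=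
      contDiffOn_id.prodMk (contDiffOn_const.prodMk contDiffOn_const)
    exact hf.comp htriple (fun t ht => Set.mk_mem_prod ht
      (Set.mk_mem_prod (mem_univ _) (mem_univ _)))
  | succ k ih =>
    obtain ⟨Fg, hFg, hFgeq⟩ := integral_G_smooth _ ih.continuousOn
    have hu : ContDiffOn ℝ 2
        (fun t => gq b1 b2 b3 t + ∫ s in (0:ℝ)..1, G01 t s * psiC f φ b1 b2 b3 k s)
        (Icc 0 1) := by
      exact ContDiffOn.congr (hgq.contDiffOn.add hFg.contDiffOn)
        (fun t ht => by rw [hFgeq t ht])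
    have hv : ContDiffOn ℝ 2
        (fun t => gq b1 b2 b3 (φ t) + ∫ s in (0:ℝ)..1, G01 (φ t) s * psiC f φ b1 b2 b3 k s)
        (Icc 0 1) := hu.comp hφ hφm
    have htriple : ContDiffOn ℝ 2 (fun t : ℝ =>
        (t, gq b1 b2 b3 t + ∫ s in (0:ℝ)..1, G01 t s * psiC f φ b1 b2 b3 k s,
          gq b1 b2 b3 (φ t) + ∫ s in (0:ℝ)..1, G01 (φ t) s * psiC f φ b1 b2 b3 k s))
        (Icc 0 1) := contDiffOn_id.prodMk (hu.prodMk hv)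
    exact hf.comp htriple (fun t ht => Set.mk_mem_prod ht
      (Set.mk_mem_prod (mem_univ _) (mem_univ _)))

lemma exists_deriv_data (ψ : ℝ → ℝ) (hψ : ContDiffOn ℝ 2 ψ (Icc 0 1)) :
    ∃ (dψ : ℝ → ℝ) (A B L : ℝ), 0 ≤ A ∧ 0 ≤ B ∧ 0 ≤ L ∧
      ContinuousOn dψ (Icc 0 1) ∧
      (∀ x ∈ Icc (0:ℝ) 1, HasDerivWithinAt ψ (dψ x) (Icc 0 1) x) ∧
      (∀ x ∈ Icc (0:ℝ) 1, |ψ x| ≤ A) ∧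
      (∀ x ∈ Icc (0:ℝ) 1, |dψ x| ≤ B) ∧
      (∀ x ∈ Icc (0:ℝ) 1, ∀ y ∈ Icc (0:ℝ) 1, |dψ x - dψ y| ≤ L * |x - y|) := by
  have U : UniqueDiffOn ℝ (Icc (0:ℝ) 1) := uniqueDiffOn_Icc zero_lt_one
  set dψ := derivWithin ψ (Icc (0:ℝ) 1) with hdψ
  have hd1 : ContDiffOn ℝ 1 dψ (Icc 0 1) := hψ.derivWithin U (by norm_num)
  have hdiff : DifferentiableOn ℝ ψ (Icc 0 1) := hψ.differentiableOn (by norm_num)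
  have hdW : ∀ x ∈ Icc (0:ℝ) 1, HasDerivWithinAt ψ (dψ x) (Icc 0 1) x :=
    fun x hx => (hdiff x hx).hasDerivWithinAt
  set d2 := derivWithin dψ (Icc (0:ℝ) 1) with hd2
  have hd2c : ContinuousOn d2 (Icc 0 1) := by
    have h10 : (1 : WithTop ℕ∞) = 0 + 1 := rfl
    rw [h10] at hd1
    exact ((contDiffOn_succ_iff_derivWithin U).1 hd1).2.2.continuousOn
  have hd1diff : DifferentiableOn ℝ dψ (Icc 0 1) := hd1.differentiableOn one_ne_zero
  obtain ⟨A0, hA0⟩ := isCompact_Icc.exists_bound_of_continuousOn hψ.continuousOn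
  obtain ⟨B0, hB0⟩ := isCompact_Icc.exists_bound_of_continuousOn hd1.continuousOn
  obtain ⟨L0, hL0⟩ := isCompact_Icc.exists_bound_of_continuousOn hd2c
  refine ⟨dψ, max A0 0, max B0 0, max L0 0, le_max_right _ _, le_max_right _ _,
    le_max_right _ _, hd1.continuousOn, hdW, ?_, ?_, ?_⟩
  · intro x hx
    exact le_trans (by rw [← Real.norm_eq_abs]; exact hA0 x hx) (le_max_left _ _)
  · intro x hx
    exact le_trans (by rw [← Real.norm_eq_abs]; exact hB0 x hx) (le_max_left _ _)
  · intro x hx y hy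
    have := Convex.norm_image_sub_le_of_norm_hasDerivWithin_le
      (f := dψ) (f' := d2) (s := Icc (0:ℝ) 1) (C := max L0 0)
      (fun z hz => (hd1diff z hz).hasDerivWithinAt)
      (fun z hz => le_trans (hL0 z hz) (le_max_left _ _)) (convex_Icc 0 1) hy hx
    simpa using this

lemma node_mem {N j : ℕ} (hN : 1 ≤ N) (hj : j ≤ N) : ((j:ℝ)/N) ∈ Icc (0:ℝ) 1 := by
  have hNpos : (0:ℝ) < N := by exact_mod_cast Nat.pos_of_ne_zero (by omega)
  constructor
  · positivity
  · rw [div_le_one hNpos]; exact_mod_cast hj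

lemma trap_G_bound (ψ dψ : ℝ → ℝ) (A B L : ℝ) (hA : 0 ≤ A) (hB : 0 ≤ B) (hL : 0 ≤ L)
    (hψc : ContinuousOn ψ (Icc 0 1)) (hdψc : ContinuousOn dψ (Icc 0 1))
    (hdW : ∀ x ∈ Icc (0:ℝ) 1, HasDerivWithinAt ψ (dψ x) (Icc 0 1) x)
    (hAb : ∀ x ∈ Icc (0:ℝ) 1, |ψ x| ≤ A)
    (hBb : ∀ x ∈ Icc (0:ℝ) 1, |dψ x| ≤ B)
    (hLb : ∀ x ∈ Icc (0:ℝ) 1, ∀ y ∈ Icc (0:ℝ) 1, |dψ x - dψ y| ≤ L * |x - y|)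
    (t : ℝ) (ht : t ∈ Icc (0:ℝ) 1) {N : ℕ} (hN : 1 ≤ N) :
    |(∑ j ∈ Finset.range (N + 1),
        (1 / (N:ℝ)) * trapWeight N j * G01 t ((j:ℝ)/N) * ψ ((j:ℝ)/N))
      - ∫ s in (0:ℝ)..1, G01 t s * ψ s| ≤ (A + 3 * B + L) * (1 / (N:ℝ)) ^ 2 := by
  have hNpos : (0:ℝ) < N := by exact_mod_cast Nat.pos_of_ne_zero (by omega)
  set h : ℝ := 1 / (N:ℝ) with hh
  have hhpos : 0 < h := by positivity
  set g : ℝ → ℝ := fun s => G01 t s * ψ s with hg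
  set g' : ℝ → ℝ := fun s => Gs01 t s * ψ s + G01 t s * dψ s with hg'
  set M : ℝ := A + 3 * B + L with hM
  have hM0 : 0 ≤ M := by rw [hM]; linarith
  have hgcont : ContinuousOn g (Icc 0 1) := ((G01_continuous_snd t).continuousOn).mul hψc
  have hg'cont : ContinuousOn g' (Icc 0 1) :=
    (((Gs01_continuous_snd t).continuousOn).mul hψc).add
      (((G01_continuous_snd t).continuousOn).mul hdψc)
  have hψlip : ∀ x ∈ Icc (0:ℝ) 1, ∀ y ∈ Icc (0:ℝ) 1, |ψ x - ψ y| ≤ B * |x - y| := by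
    intro x hx y hy
    have := Convex.norm_image_sub_le_of_norm_hasDerivWithin_le
      (f := ψ) (f' := dψ) (s := Icc (0:ℝ) 1) (C := B) hdW
      (fun z hz => by rw [Real.norm_eq_abs]; exact hBb z hz) (convex_Icc 0 1) hy hx
    simpa using this
  have hg'lip : ∀ x ∈ Icc (0:ℝ) 1, ∀ y ∈ Icc (0:ℝ) 1, |g' x - g' y| ≤ M * |x - y| := by
    intro x hx y hy
    have hid : g' x - g' y = (Gs01 t x - Gs01 t y) * ψ x + Gs01 t y * (ψ x - ψ y)
        + (G01 t x - G01 t y) * dψ x + G01 t y * (dψ x - dψ y) := by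
      rw [hg']; ring
    have e1 : |(Gs01 t x - Gs01 t y) * ψ x| ≤ |x - y| * A := by
      rw [abs_mul]
      exact mul_le_mul (Gs01_lip t x y) (hAb x hx) (abs_nonneg _) (abs_nonneg _)
    have e2 : |Gs01 t y * (ψ x - ψ y)| ≤ 3/2 * (B * |x - y|) := by
      rw [abs_mul]
      exact mul_le_mul (abs_Gs01_le ht hy) (hψlip x hx y hy) (abs_nonneg _) (by norm_num)
    have e3 : |(G01 t x - G01 t y) * dψ x| ≤ 3/2 * |x - y| * B := by
      rw [abs_mul]
      exact mul_le_mul (G01_lip_snd ht hx hy) (hBb x hx) (abs_nonneg _) (by positivity)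
    have e4 : |G01 t y * (dψ x - dψ y)| ≤ 1 * (L * |x - y|) := by
      rw [abs_mul]
      exact mul_le_mul (abs_G01_le ht hy) (hLb x hx y hy) (abs_nonneg _) (by norm_num)
    calc |g' x - g' y| ≤ |(Gs01 t x - Gs01 t y) * ψ x + Gs01 t y * (ψ x - ψ y)
          + (G01 t x - G01 t y) * dψ x| + |G01 t y * (dψ x - dψ y)| := by
          rw [hid]; exact abs_add_le _ _
      _ ≤ (|(Gs01 t x - Gs01 t y) * ψ x + Gs01 t y * (ψ x - ψ y)|
          + |(G01 t x - G01 t y) * dψ x|) + |G01 t y * (dψ x - dψ y)| := by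
          gcongr; exact abs_add_le _ _
      _ ≤ ((|(Gs01 t x - Gs01 t y) * ψ x| + |Gs01 t y * (ψ x - ψ y)|)
          + |(G01 t x - G01 t y) * dψ x|) + |G01 t y * (dψ x - dψ y)| := by
          gcongr; exact abs_add_le _ _
      _ ≤ (|x - y| * A + 3/2 * (B * |x - y|) + 3/2 * |x - y| * B) + 1 * (L * |x - y|) := by
          gcongr
      _ = M * |x - y| := by rw [hM]; ring
  -- per subinterval error
  have hnode : ∀ j : ℕ, j ≤ N → ((j:ℝ)/N) ∈ Icc (0:ℝ) 1 := fun j hj => node_mem hN hj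
  have hstep : ∀ j : ℕ, ((j:ℝ)+1)/N - (j:ℝ)/N = h := by
    intro j; rw [hh]; field_simp; ring
  have hper : ∀ j : ℕ, j < N →
      |(∫ s in ((j:ℝ)/N)..(((j:ℝ)+1)/N), g s)
        - h * (g ((j:ℝ)/N) + g (((j:ℝ)+1)/N)) / 2| ≤ M * h ^ 3 := by
    intro j hj
    have hj1 : (j:ℝ) + 1 ≤ N := by exact_mod_cast hj
    have ha : ((j:ℝ)/N) ∈ Icc (0:ℝ) 1 := hnode j hj.le
    have hb' : (((j:ℝ)+1)/N) ∈ Icc (0:ℝ) 1 := by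
      have := hnode (j+1) hj
      push_cast at this
      exact this
    have hab : (j:ℝ)/N ≤ ((j:ℝ)+1)/N := by gcongr; linarith
    have hsub : Icc ((j:ℝ)/N) (((j:ℝ)+1)/N) ⊆ Icc (0:ℝ) 1 := Icc_subset_Icc ha.1 hb'.2
    have hderivsub : ∀ x ∈ Ioo ((j:ℝ)/N) (((j:ℝ)+1)/N), HasDerivAt g (g' x) x := by
      intro x hx
      have hx1 : 0 < x := lt_of_le_of_lt ha.1 hx.1
      have hx2 : x < 1 := lt_of_lt_of_le hx.2 hb'.2
      have hψd : HasDerivAt ψ (dψ x) x :=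
        (hdW x ⟨hx1.le, hx2.le⟩).hasDerivAt (Icc_mem_nhds hx1 hx2)
      exact (G01_hasDerivAt_snd t x).mul hψd
    have := trap_interval g g' ((j:ℝ)/N) (((j:ℝ)+1)/N) M hab hM0
      (hgcont.mono hsub) (hg'cont.mono hsub) hderivsub
      (fun x hx y hy => hg'lip x (hsub hx) y (hsub hy))
    rwa [hstep j] at this
  -- rewrite the quadrature sum
  have hterm : ∀ j ∈ Finset.range (N + 1),
      h * trapWeight N j * G01 t ((j:ℝ)/N) * ψ ((j:ℝ)/N)
        = trapWeight N j * (g ((j:ℝ)/N)) * h := by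
    intro j _; rw [hg]; ring
  have hsum1 : (∑ j ∈ Finset.range (N + 1),
      h * trapWeight N j * G01 t ((j:ℝ)/N) * ψ ((j:ℝ)/N))
      = ∑ j ∈ Finset.range N, (g ((j:ℝ)/N) + g (((j:ℝ)+1)/N)) / 2 * h := by
    rw [Finset.sum_congr rfl hterm, ← Finset.sum_mul, trap_sum_eq hN (fun j => g ((j:ℝ)/N)),
      Finset.sum_mul]
    apply Finset.sum_congr rfl
    intro j _
    push_cast
    ring_nf
  have hint : (∫ s in (0:ℝ)..1, g s)
      = ∑ j ∈ Finset.range N, ∫ s in ((j:ℝ)/N)..(((j:ℝ)+1)/N), g s := by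
    have hadj := intervalIntegral.sum_integral_adjacent_intervals
      (a := fun k : ℕ => (k:ℝ)/N) (n := N) (f := g) (μ := volume) ?_
    · have h0 : ((0:ℕ):ℝ)/N = 0 := by simp
      have h1 : ((N:ℕ):ℝ)/N = 1 := by field_simp
      rw [h0, h1] at hadj
      rw [← hadj]
      apply Finset.sum_congr rfl
      intro j _
      have : (((j+1:ℕ)):ℝ)/N = ((j:ℝ)+1)/N := by push_cast; ring
      rw [this]
    · intro k hk
      have hk1 : (k:ℝ) + 1 ≤ N := by exact_mod_cast hk
      have hcast : (((k+1:ℕ)):ℝ)/(N:ℝ) = ((k:ℝ)+1)/N := by push_cast; ring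
      show IntervalIntegrable g volume ((k:ℝ)/N) ((((k+1):ℕ):ℝ)/N)
      rw [hcast]
      apply ContinuousOn.intervalIntegrable
      have hsub : uIcc ((k:ℝ)/N) (((k:ℝ)+1)/N) ⊆ Icc (0:ℝ) 1 := by
        rw [uIcc_of_le (by gcongr; linarith)]
        exact Icc_subset_Icc (node_mem hN hk.le).1 (by rw [div_le_one hNpos]; linarith)
      exact hgcont.mono hsub
  calc |(∑ j ∈ Finset.range (N + 1),
        h * trapWeight N j * G01 t ((j:ℝ)/N) * ψ ((j:ℝ)/N)) - ∫ s in (0:ℝ)..1, g s|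
      = |∑ j ∈ Finset.range N,
          ((g ((j:ℝ)/N) + g (((j:ℝ)+1)/N)) / 2 * h - ∫ s in ((j:ℝ)/N)..(((j:ℝ)+1)/N), g s)| := by
        rw [hsum1, hint, Finset.sum_sub_distrib]
    _ ≤ ∑ j ∈ Finset.range N,
          |(g ((j:ℝ)/N) + g (((j:ℝ)+1)/N)) / 2 * h - ∫ s in ((j:ℝ)/N)..(((j:ℝ)+1)/N), g s| :=
        Finset.abs_sum_le_sum_abs _ _
    _ ≤ ∑ _j ∈ Finset.range N, M * h ^ 3 := by
        apply Finset.sum_le_sum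
        intro j hj
        have := hper j (Finset.mem_range.1 hj)
        rw [abs_sub_comm] at this
        have heq : h * (g ((j:ℝ)/N) + g (((j:ℝ)+1)/N)) / 2
            = (g ((j:ℝ)/N) + g (((j:ℝ)+1)/N)) / 2 * h := by ring
        rwa [heq] at this
    _ = (N:ℝ) * (M * h ^ 3) := by
        rw [Finset.sum_const, Finset.card_range]; simp
    _ ≤ M * h ^ 2 := by
        apply le_of_eq
        rw [hh]
        field_simp

/-- For every fixed `k`, the discrete iterate `Ψ_k` approximates the continuous iterate `ψ_k`
at the grid nodes with accuracy `O(h²)`, `h = 1/N`. -/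
theorem discrete_iterates_psi_second_order
    (b1 b2 b3 : ℝ) (φ : ℝ → ℝ) (f : ℝ → ℝ → ℝ → ℝ)
    (hφ : ContDiffOn ℝ 2 φ (Icc 0 1)) (hφm : MapsTo φ (Icc 0 1) (Icc 0 1))
    (hf : ContDiffOn ℝ 2 (fun p : ℝ × ℝ × ℝ => f p.1 p.2.1 p.2.2)
      (Icc 0 1 ×ˢ (univ : Set ℝ) ×ˢ (univ : Set ℝ)))
    (L1 L2 : ℝ) (hL1 : 0 ≤ L1) (hL2 : 0 ≤ L2)
    (hLip : ∀ t ∈ Icc (0:ℝ) 1, ∀ u1 u2 v1 v2 : ℝ,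
      |f t u2 v2 - f t u1 v1| ≤ L1 * |u2 - u1| + L2 * |v2 - v1|) :
    ∀ k : ℕ, ∃ C > (0:ℝ), ∀ N : ℕ, 1 ≤ N → ∀ i : ℕ, i ≤ N →
      |PsiD f φ b1 b2 b3 N k i - psiC f φ b1 b2 b3 k ((i : ℝ) / N)|
        ≤ C * (1 / (N:ℝ)) ^ 2 := by
  intro k
  induction k with
  | zero =>
    refine ⟨1, one_pos, ?_⟩
    intro N hN i hi
    have h1 : PsiD f φ b1 b2 b3 N 0 i = f ((i:ℝ)/N) 0 0 := rfl
    have h2 : psiC f φ b1 b2 b3 0 ((i:ℝ)/N) = f ((i:ℝ)/N) 0 0 := rfl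
    rw [h1, h2, sub_self, abs_zero]
    positivity
  | succ k ih =>
    obtain ⟨C, hC, hCb⟩ := ih
    have hsm := psiC_smooth b1 b2 b3 φ f hφ hφm hf k
    obtain ⟨dψ, A, B, L, hA, hB, hL, hdc, hdW, hAb, hBb, hLb⟩ := exists_deriv_data _ hsm
    set ψ := psiC f φ b1 b2 b3 k with hψdef
    set M : ℝ := A + 3 * B + L with hMdef
    have hM0 : 0 ≤ M := by rw [hMdef]; linarith
    refine ⟨max 1 ((L1 + L2) * (C + M)), lt_of_lt_of_le one_pos (le_max_left _ _), ?_⟩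
    intro N hN i hi
    have hNpos : (0:ℝ) < N := by exact_mod_cast Nat.pos_of_ne_zero (by omega)
    set h : ℝ := 1 / (N:ℝ) with hh
    have hh0 : 0 ≤ h ^ 2 := by positivity
    have hti : ((i:ℝ)/N) ∈ Icc (0:ℝ) 1 := node_mem hN hi
    have hxi : φ ((i:ℝ)/N) ∈ Icc (0:ℝ) 1 := hφm hti
    -- the key quadrature + propagation bound, for any t ∈ [0,1]
    have key : ∀ t ∈ Icc (0:ℝ) 1,
        |(∑ j ∈ Finset.range (N + 1),
            (1 / (N:ℝ)) * trapWeight N j * G01 t ((j:ℝ)/N) * PsiD f φ b1 b2 b3 N k j)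
          - ∫ s in (0:ℝ)..1, G01 t s * ψ s| ≤ (C + M) * h ^ 2 := by
      intro t ht
      have htrap := trap_G_bound ψ dψ A B L hA hB hL hsm.continuousOn hdc hdW hAb hBb hLb
        t ht hN
      have hsplit : ∀ j ∈ Finset.range (N + 1),
          (1 / (N:ℝ)) * trapWeight N j * G01 t ((j:ℝ)/N) * PsiD f φ b1 b2 b3 N k j
            = (1 / (N:ℝ)) * trapWeight N j * G01 t ((j:ℝ)/N)
                * (PsiD f φ b1 b2 b3 N k j - ψ ((j:ℝ)/N))
              + (1 / (N:ℝ)) * trapWeight N j * G01 t ((j:ℝ)/N) * ψ ((j:ℝ)/N) := by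
        intro j _; ring
      rw [Finset.sum_congr rfl hsplit, Finset.sum_add_distrib]
      have hdelta : |∑ j ∈ Finset.range (N + 1),
          (1 / (N:ℝ)) * trapWeight N j * G01 t ((j:ℝ)/N)
            * (PsiD f φ b1 b2 b3 N k j - ψ ((j:ℝ)/N))| ≤ C * h ^ 2 := by
        calc |∑ j ∈ Finset.range (N + 1),
            (1 / (N:ℝ)) * trapWeight N j * G01 t ((j:ℝ)/N)
              * (PsiD f φ b1 b2 b3 N k j - ψ ((j:ℝ)/N))|
            ≤ ∑ j ∈ Finset.range (N + 1),
              |(1 / (N:ℝ)) * trapWeight N j * G01 t ((j:ℝ)/N)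
                * (PsiD f φ b1 b2 b3 N k j - ψ ((j:ℝ)/N))| :=
              Finset.abs_sum_le_sum_abs _ _
          _ ≤ ∑ j ∈ Finset.range (N + 1), (1 / (N:ℝ)) * trapWeight N j * (C * h ^ 2) := by
              apply Finset.sum_le_sum
              intro j hj
              have hjN : j ≤ N := by
                have := Finset.mem_range.1 hj; omega
              have hw0 : (0:ℝ) ≤ (1 / (N:ℝ)) * trapWeight N j := by
                have := trapWeight_nonneg N j; positivity
              have hGb : |G01 t ((j:ℝ)/N)| ≤ 1 := abs_G01_le ht (node_mem hN hjN)
              have hdb : |PsiD f φ b1 b2 b3 N k j - ψ ((j:ℝ)/N)| ≤ C * h ^ 2 :=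
                hCb N hN j hjN
              calc |(1 / (N:ℝ)) * trapWeight N j * G01 t ((j:ℝ)/N)
                  * (PsiD f φ b1 b2 b3 N k j - ψ ((j:ℝ)/N))|
                  = (1 / (N:ℝ)) * trapWeight N j
                    * (|G01 t ((j:ℝ)/N)| * |PsiD f φ b1 b2 b3 N k j - ψ ((j:ℝ)/N)|) := by
                    rw [abs_mul, abs_mul, abs_of_nonneg hw0]
                    ring
                _ ≤ (1 / (N:ℝ)) * trapWeight N j * (1 * (C * h ^ 2)) := by
                    apply mul_le_mul_of_nonneg_left _ hw0
                    apply mul_le_mul hGb hdb (abs_nonneg _) one_pos.le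
                _ = (1 / (N:ℝ)) * trapWeight N j * (C * h ^ 2) := by ring
          _ = (∑ j ∈ Finset.range (N + 1), (1 / (N:ℝ)) * trapWeight N j) * (C * h ^ 2) := by
              rw [Finset.sum_mul]
          _ = C * h ^ 2 := by rw [trap_weight_total hN]; ring
      calc |(∑ j ∈ Finset.range (N + 1),
            (1 / (N:ℝ)) * trapWeight N j * G01 t ((j:ℝ)/N)
              * (PsiD f φ b1 b2 b3 N k j - ψ ((j:ℝ)/N)))
            + (∑ j ∈ Finset.range (N + 1),
              (1 / (N:ℝ)) * trapWeight N j * G01 t ((j:ℝ)/N) * ψ ((j:ℝ)/N))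
            - ∫ s in (0:ℝ)..1, G01 t s * ψ s|
          ≤ |∑ j ∈ Finset.range (N + 1),
              (1 / (N:ℝ)) * trapWeight N j * G01 t ((j:ℝ)/N)
                * (PsiD f φ b1 b2 b3 N k j - ψ ((j:ℝ)/N))|
            + |(∑ j ∈ Finset.range (N + 1),
                (1 / (N:ℝ)) * trapWeight N j * G01 t ((j:ℝ)/N) * ψ ((j:ℝ)/N))
              - ∫ s in (0:ℝ)..1, G01 t s * ψ s| := by
            rw [add_sub_assoc]
            exact abs_add_le _ _
        _ ≤ C * h ^ 2 + M * h ^ 2 := add_le_add hdelta htrap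
        _ = (C + M) * h ^ 2 := by ring
    -- now apply the Lipschitz property of f
    have hPsiD : PsiD f φ b1 b2 b3 N (k+1) i
        = f ((i:ℝ)/N)
            (gq b1 b2 b3 ((i:ℝ)/N) + ∑ j ∈ Finset.range (N + 1),
              (1 / (N:ℝ)) * trapWeight N j * G01 ((i:ℝ)/N) ((j:ℝ)/N)
                * PsiD f φ b1 b2 b3 N k j)
            (gq b1 b2 b3 (φ ((i:ℝ)/N)) + ∑ j ∈ Finset.range (N + 1),
              (1 / (N:ℝ)) * trapWeight N j * G01 (φ ((i:ℝ)/N)) ((j:ℝ)/N)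
                * PsiD f φ b1 b2 b3 N k j) := rfl
    have hpsiC : psiC f φ b1 b2 b3 (k+1) ((i:ℝ)/N)
        = f ((i:ℝ)/N)
            (gq b1 b2 b3 ((i:ℝ)/N) + ∫ s in (0:ℝ)..1, G01 ((i:ℝ)/N) s * ψ s)
            (gq b1 b2 b3 (φ ((i:ℝ)/N)) + ∫ s in (0:ℝ)..1, G01 (φ ((i:ℝ)/N)) s * ψ s) := rfl
    rw [hPsiD, hpsiC]
    have hlipapp := hLip ((i:ℝ)/N) hti
      (gq b1 b2 b3 ((i:ℝ)/N) + ∫ s in (0:ℝ)..1, G01 ((i:ℝ)/N) s * ψ s)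
      (gq b1 b2 b3 ((i:ℝ)/N) + ∑ j ∈ Finset.range (N + 1),
        (1 / (N:ℝ)) * trapWeight N j * G01 ((i:ℝ)/N) ((j:ℝ)/N) * PsiD f φ b1 b2 b3 N k j)
      (gq b1 b2 b3 (φ ((i:ℝ)/N)) + ∫ s in (0:ℝ)..1, G01 (φ ((i:ℝ)/N)) s * ψ s)
      (gq b1 b2 b3 (φ ((i:ℝ)/N)) + ∑ j ∈ Finset.range (N + 1),
        (1 / (N:ℝ)) * trapWeight N j * G01 (φ ((i:ℝ)/N)) ((j:ℝ)/N) * PsiD f φ b1 b2 b3 N k j)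
    refine le_trans hlipapp ?_
    have hu := key ((i:ℝ)/N) hti
    have hv := key (φ ((i:ℝ)/N)) hxi
    have e1 : gq b1 b2 b3 ((i:ℝ)/N) + (∑ j ∈ Finset.range (N + 1),
        (1 / (N:ℝ)) * trapWeight N j * G01 ((i:ℝ)/N) ((j:ℝ)/N) * PsiD f φ b1 b2 b3 N k j)
        - (gq b1 b2 b3 ((i:ℝ)/N) + ∫ s in (0:ℝ)..1, G01 ((i:ℝ)/N) s * ψ s)
        = (∑ j ∈ Finset.range (N + 1),
          (1 / (N:ℝ)) * trapWeight N j * G01 ((i:ℝ)/N) ((j:ℝ)/N) * PsiD f φ b1 b2 b3 N k j)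
          - ∫ s in (0:ℝ)..1, G01 ((i:ℝ)/N) s * ψ s := by ring
    have e2 : gq b1 b2 b3 (φ ((i:ℝ)/N)) + (∑ j ∈ Finset.range (N + 1),
        (1 / (N:ℝ)) * trapWeight N j * G01 (φ ((i:ℝ)/N)) ((j:ℝ)/N) * PsiD f φ b1 b2 b3 N k j)
        - (gq b1 b2 b3 (φ ((i:ℝ)/N)) + ∫ s in (0:ℝ)..1, G01 (φ ((i:ℝ)/N)) s * ψ s)
        = (∑ j ∈ Finset.range (N + 1),
          (1 / (N:ℝ)) * trapWeight N j * G01 (φ ((i:ℝ)/N)) ((j:ℝ)/N) * PsiD f φ b1 b2 b3 N k j)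
          - ∫ s in (0:ℝ)..1, G01 (φ ((i:ℝ)/N)) s * ψ s := by ring
    rw [e1, e2]
    calc L1 * |(∑ j ∈ Finset.range (N + 1),
          (1 / (N:ℝ)) * trapWeight N j * G01 ((i:ℝ)/N) ((j:ℝ)/N) * PsiD f φ b1 b2 b3 N k j)
          - ∫ s in (0:ℝ)..1, G01 ((i:ℝ)/N) s * ψ s|
        + L2 * |(∑ j ∈ Finset.range (N + 1),
          (1 / (N:ℝ)) * trapWeight N j * G01 (φ ((i:ℝ)/N)) ((j:ℝ)/N) * PsiD f φ b1 b2 b3 N k j)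
          - ∫ s in (0:ℝ)..1, G01 (φ ((i:ℝ)/N)) s * ψ s|
        ≤ L1 * ((C + M) * h ^ 2) + L2 * ((C + M) * h ^ 2) := by
          apply add_le_add
          · exact mul_le_mul_of_nonneg_left hu hL1
          · exact mul_le_mul_of_nonneg_left hv hL2
      _ = ((L1 + L2) * (C + M)) * h ^ 2 := by ring
      _ ≤ max 1 ((L1 + L2) * (C + M)) * h ^ 2 :=
          mul_le_mul_of_nonneg_right (le_max_right _ _) hh0
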